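/- Let τ ≥ 2 and m ≥ 2, and let P be the set of prime numbers p with p ≤ m. There exist a finite simple graph G and a configuration y of the conjunctive network with firing memory on G with uniform maximum delay dt_i = τ at every node, such that y is periodic and its minimal period is at least Π_{p ∈ P} p. -/

import Mathlib

open Classical in
/-- The conjunctive network on a finite simple graph `G`:
`F(x)_i = ⋀_{j adjacent to i} x_j`. -/
noncomputable def conjNet {V : Type*} [Fintype V] (G : SimpleGraph V)
    (x : V → Bool) : V → Bool :=
  fun i => if ∀ j, G.Adj i j → x j = true then true else false

/-- One step of the conjunctive network with firing memory on `G` with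
maximum delays `dt`.  A configuration assigns to each node a pair
`(xᵢ, Δᵢ)` of a Boolean state and a delay. -/
noncomputable def fmStep {V : Type*} [Fintype V] (G : SimpleGraph V) (dt : V → ℕ)
    (y : V → Bool × ℕ) : V → Bool × ℕ :=
  fun i =>
    let f := conjNet G (fun j => (y j).1) i
    let d : ℕ := if f = true then dt i else (y i).2 - 1
    (if 1 ≤ d then true else f, d)

-- auxiliary development
abbrev fmV (τ k : ℕ) := ZMod k ⊕ ZMod (τ + 1)

noncomputable def fmPhase (τ k : ℕ) (c : ZMod k) : ZMod (τ + 1) :=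
  -(ZMod.cast c)

noncomputable def fmD (τ k : ℕ) (t : ℕ) : fmV τ k → ℕ
  | Sum.inl c =>
      if c = 0 ∧ t = 0 then 1
      else if c = 1 ∧ 1 ≤ t then τ + 1 - t
      else (fmPhase τ k c - (t : ZMod (τ + 1))).val
  | Sum.inr j => (j - (t : ZMod (τ + 1))).val

noncomputable def fmY (τ k t : ℕ) : fmV τ k → Bool × ℕ :=
  fun v => (decide (1 ≤ fmD τ k t v), fmD τ k t v)

def fmAdj (τ k : ℕ) : fmV τ k → fmV τ k → Prop
  | Sum.inl c, Sum.inl c' => c' = c + 1 ∨ c = c' + 1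
  | Sum.inl c, Sum.inr j => j ≠ fmPhase τ k c ∧ j ≠ fmPhase τ k c + 1
  | Sum.inr j, Sum.inl c => j ≠ fmPhase τ k c ∧ j ≠ fmPhase τ k c + 1
  | Sum.inr j, Sum.inr j' => j' ≠ j

def fmG (τ k : ℕ) (h1k : 1 < k) : SimpleGraph (fmV τ k) where
  Adj := fmAdj τ k
  symm := by
    refine ⟨?_⟩
    rintro (c | j) (c' | j') h
    · exact Or.symm h
    · exact h
    · exact h
    · exact Ne.symm h
  loopless := by
    haveI : Fact (1 < k) := ⟨h1k⟩
    refine ⟨?_⟩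
    rintro (c | j) h
    · rcases h with h | h <;> exact one_ne_zero (left_eq_add.mp h)
    · exact h rfl

lemma conjNet_eq_true_iff {V : Type*} [Fintype V] {G : SimpleGraph V} {x : V → Bool} {i : V} :
    conjNet G x i = true ↔ ∀ j, G.Adj i j → x j = true := by
  unfold conjNet
  split <;> simp_all

lemma conjNet_eq_false {V : Type*} [Fintype V] {G : SimpleGraph V} {x : V → Bool} {i : V}
    (h : ¬ (conjNet G x i = true)) : conjNet G x i = false := by
  cases hc : conjNet G x i
  · rfl
  · exact absurd hc h

section Aux

variable {τ k : ℕ}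

lemma fmPhase_eq_castHom (hdvd : τ + 1 ∣ k) (c : ZMod k) :
    fmPhase τ k c = -(ZMod.castHom hdvd (ZMod (τ + 1)) c) := by
  rw [ZMod.castHom_apply]; rfl

lemma fmPhase_zero (hdvd : τ + 1 ∣ k) : fmPhase τ k 0 = 0 := by
  rw [fmPhase_eq_castHom hdvd, map_zero, neg_zero]

lemma fmPhase_one (hdvd : τ + 1 ∣ k) : fmPhase τ k 1 = -1 := by
  rw [fmPhase_eq_castHom hdvd, map_one]

lemma fmPhase_sub_one (hdvd : τ + 1 ∣ k) (c : ZMod k) :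
    fmPhase τ k (c - 1) = fmPhase τ k c + 1 := by
  rw [fmPhase_eq_castHom hdvd, fmPhase_eq_castHom hdvd, map_sub, map_one]; ring

lemma fmPhase_add_one (hdvd : τ + 1 ∣ k) (c : ZMod k) :
    fmPhase τ k (c + 1) = fmPhase τ k c - 1 := by
  rw [fmPhase_eq_castHom hdvd, fmPhase_eq_castHom hdvd, map_add, map_one]; ring

lemma fmPhase_neg (hdvd : τ + 1 ∣ k) (c : ZMod k) :
    fmPhase τ k (-c) = -fmPhase τ k c := by
  rw [fmPhase_eq_castHom hdvd, fmPhase_eq_castHom hdvd, map_neg]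

-- values in ZMod (τ+1)
lemma val_sub_one' (hτ : 2 ≤ τ) {x : ZMod (τ + 1)} (hx : x ≠ 0) :
    (x - 1).val = x.val - 1 := by
  have h1 : 1 ≤ x.val := Nat.pos_of_ne_zero (fun h => hx ((ZMod.val_eq_zero x).mp h))
  have h2 : x.val - 1 < τ + 1 := lt_of_le_of_lt (Nat.sub_le _ _) (ZMod.val_lt x)
  have h3 : ((x.val - 1 : ℕ) : ZMod (τ + 1)) = x - 1 := by
    rw [Nat.cast_sub h1, ZMod.natCast_zmod_val, Nat.cast_one]
  rw [← h3, ZMod.val_cast_of_lt h2]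

lemma val_neg_one' (hτ : 2 ≤ τ) : (-1 : ZMod (τ + 1)).val = τ := by
  haveI : Fact (1 < τ + 1) := ⟨by omega⟩
  rw [ZMod.neg_val, if_neg one_ne_zero, ZMod.val_one]
  omega

lemma natCast_tau (hτ : 2 ≤ τ) : ((τ : ℕ) : ZMod (τ + 1)) = -1 := by
  have h := ZMod.natCast_self (τ + 1)
  push_cast at h
  linear_combination h

lemma natCast_t_val (t : ℕ) (ht : t < τ + 1) : ((t : ℕ) : ZMod (τ + 1)).val = t :=
  ZMod.val_cast_of_lt ht

lemma natCast_t_ne_neg_one (hτ : 2 ≤ τ) {t : ℕ} (ht : t < τ) :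
    ((t : ℕ) : ZMod (τ + 1)) ≠ -1 := by
  intro h
  have h1 : ((t : ℕ) : ZMod (τ + 1)).val = t := natCast_t_val t (by omega)
  rw [h, val_neg_one' hτ] at h1
  omega

lemma fmTwo_ne_zero (hτ : 2 ≤ τ) : (2 : ZMod (τ + 1)) ≠ 0 := by
  intro h
  have h1 : ((2 : ℕ) : ZMod (τ + 1)).val = 2 := natCast_t_val 2 (by omega)
  rw [Nat.cast_ofNat, h, ZMod.val_zero] at h1
  omega

-- zero characterizations
lemma fmD_inr (t : ℕ) (j : ZMod (τ + 1)) :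
    fmD τ k t (Sum.inr j) = (j - (t : ZMod (τ + 1))).val := rfl

lemma fmD_inr_eq_zero_iff (t : ℕ) (j : ZMod (τ + 1)) :
    fmD τ k t (Sum.inr j) = 0 ↔ j = (t : ZMod (τ + 1)) := by
  rw [fmD_inr, ZMod.val_eq_zero, sub_eq_zero]

lemma fmD_inl_eq_zero_iff (hτ : 2 ≤ τ) (hdvd : τ + 1 ∣ k) {t : ℕ} (ht : t < τ) (c : ZMod k) :
    fmD τ k t (Sum.inl c) = 0 ↔
      (fmPhase τ k c = (t : ZMod (τ + 1)) ∧ ¬(c = 0 ∧ t = 0)) := by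
  show (if c = 0 ∧ t = 0 then 1
      else if c = 1 ∧ 1 ≤ t then τ + 1 - t
      else (fmPhase τ k c - (t : ZMod (τ + 1))).val) = 0 ↔ _
  by_cases h0 : c = 0 ∧ t = 0
  · rw [if_pos h0]; simp [h0]
  · rw [if_neg h0]
    by_cases h1 : c = 1 ∧ 1 ≤ t
    · rw [if_pos h1]
      constructor
      · intro h; omega
      · rintro ⟨hp, -⟩
        exfalso
        rw [h1.1, fmPhase_one hdvd] at hp
        exact natCast_t_ne_neg_one hτ ht hp.symm
    · rw [if_neg h1, ZMod.val_eq_zero, sub_eq_zero]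
      exact ⟨fun h => ⟨h, h0⟩, fun h => h.1⟩

end Aux

section Fire

variable {τ k : ℕ} [NeZero k]

lemma fmY_fst_true_iff {t : ℕ} {v : fmV τ k} :
    (fmY τ k t v).1 = true ↔ fmD τ k t v ≠ 0 := by
  simp only [fmY, decide_eq_true_eq]
  omega

lemma fire_inr (hτ : 2 ≤ τ) (hdvd : τ + 1 ∣ k) (h1k : 1 < k) {t : ℕ} (ht : t < τ)
    (j : ZMod (τ + 1)) :
    conjNet (fmG τ k h1k) (fun v => (fmY τ k t v).1) (Sum.inr j) = true ↔
      j = ((t : ℕ) : ZMod (τ + 1)) := by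
  rw [conjNet_eq_true_iff]
  constructor
  · intro h
    by_contra hj
    have hadj : (fmG τ k h1k).Adj (Sum.inr j) (Sum.inr ((t : ℕ) : ZMod (τ + 1))) := by
      show ((t : ℕ) : ZMod (τ + 1)) ≠ j
      exact fun hh => hj hh.symm
    have h2 := h _ hadj
    rw [fmY_fst_true_iff] at h2
    exact h2 ((fmD_inr_eq_zero_iff t _).mpr rfl)
  · rintro rfl v hadj
    rw [fmY_fst_true_iff]
    cases v with
    | inl c =>
      have hne : ((t : ℕ) : ZMod (τ + 1)) ≠ fmPhase τ k c ∧
          ((t : ℕ) : ZMod (τ + 1)) ≠ fmPhase τ k c + 1 := hadj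
      intro h0
      exact hne.1 ((fmD_inl_eq_zero_iff hτ hdvd ht c).mp h0).1.symm
    | inr j' =>
      have hne : j' ≠ ((t : ℕ) : ZMod (τ + 1)) := hadj
      intro h0
      exact hne ((fmD_inr_eq_zero_iff t j').mp h0)

lemma fire_inl (hτ : 2 ≤ τ) (hdvd : τ + 1 ∣ k) (h1k : 1 < k) {t : ℕ} (ht : t < τ)
    (c : ZMod k) :
    conjNet (fmG τ k h1k) (fun v => (fmY τ k t v).1) (Sum.inl c) = true ↔
      (fmPhase τ k c = ((t : ℕ) : ZMod (τ + 1)) ∨ (c = 1 ∧ t = 0)) := by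
  haveI : Fact (1 < τ + 1) := ⟨by omega⟩
  rw [conjNet_eq_true_iff]
  constructor
  · intro h
    by_cases hph : fmPhase τ k c = ((t : ℕ) : ZMod (τ + 1))
    · exact Or.inl hph
    · have h2 : ¬ (((t : ℕ) : ZMod (τ + 1)) ≠ fmPhase τ k c ∧
          ((t : ℕ) : ZMod (τ + 1)) ≠ fmPhase τ k c + 1) := by
        intro hadj
        have h3 := h (Sum.inr ((t : ℕ) : ZMod (τ + 1))) hadj
        rw [fmY_fst_true_iff] at h3
        exact h3 ((fmD_inr_eq_zero_iff t _).mpr rfl)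
      have ht2 : ((t : ℕ) : ZMod (τ + 1)) = fmPhase τ k c + 1 := by
        by_contra hne
        exact h2 ⟨fun hh => hph hh.symm, hne⟩
      have hadj : (fmG τ k h1k).Adj (Sum.inl c) (Sum.inl (c - 1)) := by
        show c - 1 = c + 1 ∨ c = (c - 1) + 1
        right; ring
      have h3 := h _ hadj
      rw [fmY_fst_true_iff] at h3
      have h4 : fmPhase τ k (c - 1) = ((t : ℕ) : ZMod (τ + 1)) := by
        rw [fmPhase_sub_one hdvd, ← ht2]
      by_cases h5 : c - 1 = 0 ∧ t = 0
      · exact Or.inr ⟨sub_eq_zero.mp h5.1, h5.2⟩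
      · exact absurd ((fmD_inl_eq_zero_iff hτ hdvd ht _).mpr ⟨h4, h5⟩) h3
  · intro hc v hadj
    rw [fmY_fst_true_iff]
    rcases hc with hph | ⟨hc1, ht0⟩
    · cases v with
      | inl c' =>
        have hadj' : c' = c + 1 ∨ c = c' + 1 := hadj
        intro h0
        obtain ⟨hp', -⟩ := (fmD_inl_eq_zero_iff hτ hdvd ht c').mp h0
        rcases hadj' with hh | hh
        · rw [hh, fmPhase_add_one hdvd, hph] at hp'
          exact one_ne_zero (by linear_combination - hp')
        · have hc' : c' = c - 1 := by rw [hh]; ring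
          rw [hc', fmPhase_sub_one hdvd, hph] at hp'
          exact one_ne_zero (by linear_combination hp')
      | inr j =>
        have hadj' : j ≠ fmPhase τ k c ∧ j ≠ fmPhase τ k c + 1 := hadj
        intro h0
        have hj := (fmD_inr_eq_zero_iff t j).mp h0
        exact hadj'.1 (by rw [hj, ← hph])
    · subst hc1; subst ht0
      cases v with
      | inl c' =>
        have hadj' : c' = 1 + 1 ∨ (1 : ZMod k) = c' + 1 := hadj
        intro h0
        obtain ⟨hp', hn'⟩ := (fmD_inl_eq_zero_iff hτ hdvd ht c').mp h0
        rcases hadj' with hh | hh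
        · rw [hh, fmPhase_add_one hdvd, fmPhase_one hdvd] at hp'
          apply fmTwo_ne_zero hτ
          push_cast at hp' ⊢
          linear_combination - hp'
        · have hc0 : c' = 0 := by linear_combination - hh
          exact hn' ⟨hc0, rfl⟩
      | inr j =>
        have hadj' : j ≠ fmPhase τ k 1 ∧ j ≠ fmPhase τ k 1 + 1 := hadj
        intro h0
        have hj := (fmD_inr_eq_zero_iff 0 j).mp h0
        apply hadj'.2
        rw [hj, fmPhase_one hdvd]
        push_cast
        ring

end Fire

section Step

variable {τ k : ℕ} [NeZero k]

lemma fmStep_apply' {V : Type*} [Fintype V] (G : SimpleGraph V) (dt : V → ℕ)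
    (y : V → Bool × ℕ) (i : V) :
    fmStep G dt y i =
      ((if 1 ≤ (if conjNet G (fun j => (y j).1) i = true then dt i else (y i).2 - 1)
        then true else conjNet G (fun j => (y j).1) i),
       (if conjNet G (fun j => (y j).1) i = true then dt i else (y i).2 - 1)) := rfl

lemma fm_step (hτ : 2 ≤ τ) (hdvd : τ + 1 ∣ k) (h1k : 1 < k) {t : ℕ} (ht : t < τ) :
    fmStep (fmG τ k h1k) (fun _ => τ) (fmY τ k t) = fmY τ k (t + 1) := by
  haveI : Fact (1 < τ + 1) := ⟨by omega⟩
  haveI : Fact (1 < k) := ⟨h1k⟩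
  funext v
  rw [fmStep_apply']
  cases v with
  | inr j =>
    by_cases hj : j = ((t : ℕ) : ZMod (τ + 1))
    · have hf : conjNet (fmG τ k h1k) (fun v => (fmY τ k t v).1) (Sum.inr j) = true :=
        (fire_inr hτ hdvd h1k ht j).mpr hj
      rw [hf, if_pos rfl]
      have hD : fmD τ k (t + 1) (Sum.inr j) = τ := by
        rw [fmD_inr, hj]
        have h2 : ((t : ℕ) : ZMod (τ + 1)) - ((t + 1 : ℕ) : ZMod (τ + 1)) = -1 := by
          push_cast; ring
        rw [h2, val_neg_one' hτ]
      show _ = (decide (1 ≤ fmD τ k (t + 1) (Sum.inr j)), fmD τ k (t + 1) (Sum.inr j))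
      rw [hD]
      simp [show (1 : ℕ) ≤ τ by omega]
    · have hf : conjNet (fmG τ k h1k) (fun v => (fmY τ k t v).1) (Sum.inr j) = false :=
        conjNet_eq_false (fun hc => hj ((fire_inr hτ hdvd h1k ht j).mp hc))
      rw [hf, if_neg Bool.false_ne_true]
      have hsub : j - ((t : ℕ) : ZMod (τ + 1)) ≠ 0 := sub_ne_zero.mpr hj
      have hD : fmD τ k (t + 1) (Sum.inr j) = fmD τ k t (Sum.inr j) - 1 := by
        rw [fmD_inr, fmD_inr]
        have h2 : j - ((t + 1 : ℕ) : ZMod (τ + 1)) = (j - ((t : ℕ) : ZMod (τ + 1))) - 1 := by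
          push_cast; ring
        rw [h2, val_sub_one' hτ hsub]
      show _ = (decide (1 ≤ fmD τ k (t + 1) (Sum.inr j)), fmD τ k (t + 1) (Sum.inr j))
      rw [hD]
      show (if 1 ≤ fmD τ k t (Sum.inr j) - 1 then true else false, fmD τ k t (Sum.inr j) - 1) = _
      by_cases h1 : 1 ≤ fmD τ k t (Sum.inr j) - 1 <;> simp [h1]
  | inl c =>
    by_cases hc0 : fmPhase τ k c = ((t : ℕ) : ZMod (τ + 1))
    · have hf : conjNet (fmG τ k h1k) (fun v => (fmY τ k t v).1) (Sum.inl c) = true :=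
        (fire_inl hτ hdvd h1k ht c).mpr (Or.inl hc0)
      rw [hf, if_pos rfl]
      have hcne1 : ¬(c = 1 ∧ 1 ≤ t + 1) := by
        rintro ⟨h1, -⟩
        rw [h1, fmPhase_one hdvd] at hc0
        exact natCast_t_ne_neg_one hτ ht hc0.symm
      have hcne0 : ¬(c = 0 ∧ t + 1 = 0) := by rintro ⟨-, h⟩; omega
      have hD : fmD τ k (t + 1) (Sum.inl c) = τ := by
        show (if c = 0 ∧ t + 1 = 0 then 1
          else if c = 1 ∧ 1 ≤ t + 1 then τ + 1 - (t + 1)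
          else (fmPhase τ k c - ((t + 1 : ℕ) : ZMod (τ + 1))).val) = τ
        rw [if_neg hcne0, if_neg hcne1]
        have h2 : fmPhase τ k c - ((t + 1 : ℕ) : ZMod (τ + 1)) = -1 := by
          rw [hc0]; push_cast; ring
        rw [h2, val_neg_one' hτ]
      show _ = (decide (1 ≤ fmD τ k (t + 1) (Sum.inl c)), fmD τ k (t + 1) (Sum.inl c))
      rw [hD]
      simp [show (1 : ℕ) ≤ τ by omega]
    · by_cases hc1 : c = 1 ∧ t = 0
      · have hf : conjNet (fmG τ k h1k) (fun v => (fmY τ k t v).1) (Sum.inl c) = true :=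
          (fire_inl hτ hdvd h1k ht c).mpr (Or.inr hc1)
        rw [hf, if_pos rfl]
        have hD : fmD τ k (t + 1) (Sum.inl c) = τ := by
          show (if c = 0 ∧ t + 1 = 0 then 1
            else if c = 1 ∧ 1 ≤ t + 1 then τ + 1 - (t + 1)
            else (fmPhase τ k c - ((t + 1 : ℕ) : ZMod (τ + 1))).val) = τ
          rw [if_neg (by rintro ⟨-, h⟩; omega), if_pos ⟨hc1.1, by omega⟩, hc1.2]
          omega
        show _ = (decide (1 ≤ fmD τ k (t + 1) (Sum.inl c)), fmD τ k (t + 1) (Sum.inl c))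
        rw [hD]
        simp [show (1 : ℕ) ≤ τ by omega]
      · have hf : conjNet (fmG τ k h1k) (fun v => (fmY τ k t v).1) (Sum.inl c) = false := by
          apply conjNet_eq_false
          intro hc
          rcases (fire_inl hτ hdvd h1k ht c).mp hc with h | h
          · exact hc0 h
          · exact hc1 h
        rw [hf, if_neg Bool.false_ne_true]
        have hD : fmD τ k (t + 1) (Sum.inl c) = fmD τ k t (Sum.inl c) - 1 := by
          by_cases hc1' : c = 1
          · have ht1 : 1 ≤ t := by
              rcases Nat.eq_zero_or_pos t with h | h
              · exact absurd ⟨hc1', h⟩ hc1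
              · exact h
            show (if c = 0 ∧ t + 1 = 0 then 1
              else if c = 1 ∧ 1 ≤ t + 1 then τ + 1 - (t + 1)
              else (fmPhase τ k c - ((t + 1 : ℕ) : ZMod (τ + 1))).val) =
              (if c = 0 ∧ t = 0 then 1
              else if c = 1 ∧ 1 ≤ t then τ + 1 - t
              else (fmPhase τ k c - ((t : ℕ) : ZMod (τ + 1))).val) - 1
            rw [if_neg (by rintro ⟨-, h⟩; omega), if_pos ⟨hc1', by omega⟩,
              if_neg (by rintro ⟨h, -⟩; rw [hc1'] at h; exact one_ne_zero h),
              if_pos ⟨hc1', ht1⟩]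
            omega
          · have hne00 : ¬(c = 0 ∧ t = 0) := by
              rintro ⟨h0, h0t⟩
              rw [h0, fmPhase_zero hdvd, h0t] at hc0
              exact hc0 (by push_cast; ring)
            show (if c = 0 ∧ t + 1 = 0 then 1
              else if c = 1 ∧ 1 ≤ t + 1 then τ + 1 - (t + 1)
              else (fmPhase τ k c - ((t + 1 : ℕ) : ZMod (τ + 1))).val) =
              (if c = 0 ∧ t = 0 then 1
              else if c = 1 ∧ 1 ≤ t then τ + 1 - t
              else (fmPhase τ k c - ((t : ℕ) : ZMod (τ + 1))).val) - 1
            rw [if_neg (by rintro ⟨-, h⟩; omega), if_neg (by rintro ⟨h, -⟩; exact hc1' h),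
              if_neg hne00, if_neg (by rintro ⟨h, -⟩; exact hc1' h)]
            have hsub : fmPhase τ k c - ((t : ℕ) : ZMod (τ + 1)) ≠ 0 :=
              sub_ne_zero.mpr hc0
            have h2 : fmPhase τ k c - ((t + 1 : ℕ) : ZMod (τ + 1)) =
                (fmPhase τ k c - ((t : ℕ) : ZMod (τ + 1))) - 1 := by push_cast; ring
            rw [h2, val_sub_one' hτ hsub]
        show _ = (decide (1 ≤ fmD τ k (t + 1) (Sum.inl c)), fmD τ k (t + 1) (Sum.inl c))
        rw [hD]
        show (if 1 ≤ fmD τ k t (Sum.inl c) - 1 then true else false,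
          fmD τ k t (Sum.inl c) - 1) = _
        by_cases h1 : 1 ≤ fmD τ k t (Sum.inl c) - 1 <;> simp [h1]

end Step

section Sigma

variable {τ k : ℕ} [NeZero k]

def fmSigma (τ k : ℕ) : fmV τ k → fmV τ k
  | Sum.inl c => Sum.inl (c - 1)
  | Sum.inr j => Sum.inr (j + 1)

lemma fmSigma_bij : Function.Bijective (fmSigma τ k) := by
  rw [Function.bijective_iff_has_inverse]
  refine ⟨fun v => match v with
    | Sum.inl c => Sum.inl (c + 1)
    | Sum.inr j => Sum.inr (j - 1), ?_, ?_⟩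
  · rintro (c | j) <;> simp [fmSigma]
  · rintro (c | j) <;> simp [fmSigma]

lemma fmSigma_adj (hdvd : τ + 1 ∣ k) (h1k : 1 < k) (a b : fmV τ k) :
    (fmG τ k h1k).Adj (fmSigma τ k a) (fmSigma τ k b) ↔ (fmG τ k h1k).Adj a b := by
  rcases a with c | j <;> rcases b with c' | j'
  · show (c' - 1 = c - 1 + 1 ∨ c - 1 = c' - 1 + 1) ↔ (c' = c + 1 ∨ c = c' + 1)
    constructor
    · rintro (h | h)
      · exact Or.inl (by linear_combination h)
      · exact Or.inr (by linear_combination h)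
    · rintro (h | h)
      · exact Or.inl (by linear_combination h)
      · exact Or.inr (by linear_combination h)
  · show (j' + 1 ≠ fmPhase τ k (c - 1) ∧ j' + 1 ≠ fmPhase τ k (c - 1) + 1) ↔ _
    rw [fmPhase_sub_one hdvd]
    constructor
    · rintro ⟨h1, h2⟩
      exact ⟨fun he => h1 (by linear_combination he), fun he => h2 (by linear_combination he)⟩
    · rintro ⟨h1, h2⟩
      exact ⟨fun he => h1 (by linear_combination he), fun he => h2 (by linear_combination he)⟩
  · show (j + 1 ≠ fmPhase τ k (c' - 1) ∧ j + 1 ≠ fmPhase τ k (c' - 1) + 1) ↔ _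
    rw [fmPhase_sub_one hdvd]
    constructor
    · rintro ⟨h1, h2⟩
      exact ⟨fun he => h1 (by linear_combination he), fun he => h2 (by linear_combination he)⟩
    · rintro ⟨h1, h2⟩
      exact ⟨fun he => h1 (by linear_combination he), fun he => h2 (by linear_combination he)⟩
  · show j' + 1 ≠ j + 1 ↔ j' ≠ j
    constructor
    · exact fun h he => h (by rw [he])
    · exact fun h he => h (by linear_combination he)

lemma fmStep_comp {V V' : Type*} [Fintype V] [Fintype V'] (G : SimpleGraph V)
    (G' : SimpleGraph V') (e : V' → V) (hbij : Function.Bijective e)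
    (hadj : ∀ a b, G'.Adj a b ↔ G.Adj (e a) (e b)) (dt : V → ℕ) (y : V → Bool × ℕ) :
    fmStep G' (fun i => dt (e i)) (fun i => y (e i)) = fun i => fmStep G dt y (e i) := by
  have hconj : ∀ (x : V → Bool) (i : V'), conjNet G' (fun j => x (e j)) i = conjNet G x (e i) := by
    intro x i
    have hiff : (∀ j, G'.Adj i j → x (e j) = true) ↔ (∀ j, G.Adj (e i) j → x j = true) := by
      constructor
      · intro h j hj
        obtain ⟨j', rfl⟩ := hbij.2 j
        exact h j' ((hadj _ _).mpr hj)
      · intro h j hj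
        exact h (e j) ((hadj _ _).mp hj)
    unfold conjNet
    by_cases h : ∀ j, G.Adj (e i) j → x j = true
    · rw [if_pos (hiff.mpr h), if_pos h]
    · rw [if_neg (fun hh => h (hiff.mp hh)), if_neg h]
  funext i
  rw [fmStep_apply', fmStep_apply']
  beta_reduce
  rw [hconj (fun j => (y j).1) i]

lemma fm_y_tau (hτ : 2 ≤ τ) (hdvd : τ + 1 ∣ k) :
    fmY τ k τ = fun v => fmY τ k 0 (fmSigma τ k v) := by
  funext v
  rcases v with c | j
  · show (decide (1 ≤ fmD τ k τ (Sum.inl c)), fmD τ k τ (Sum.inl c)) =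
      (decide (1 ≤ fmD τ k 0 (Sum.inl (c - 1))), fmD τ k 0 (Sum.inl (c - 1)))
    have hD : fmD τ k τ (Sum.inl c) = fmD τ k 0 (Sum.inl (c - 1)) := by
      by_cases hc : c = 1
      · subst hc
        show (if (1 : ZMod k) = 0 ∧ τ = 0 then 1
          else if (1 : ZMod k) = 1 ∧ 1 ≤ τ then τ + 1 - τ
          else _) = (if (1 : ZMod k) - 1 = 0 ∧ (0:ℕ) = 0 then 1
          else if (1 : ZMod k) - 1 = 1 ∧ 1 ≤ (0:ℕ) then τ + 1 - 0
          else _)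
        rw [if_neg (by rintro ⟨-, h⟩; omega), if_pos ⟨rfl, by omega⟩,
          if_pos ⟨by ring, rfl⟩]
        omega
      · show (if c = 0 ∧ τ = 0 then 1
          else if c = 1 ∧ 1 ≤ τ then τ + 1 - τ
          else (fmPhase τ k c - ((τ : ℕ) : ZMod (τ + 1))).val) =
          (if c - 1 = 0 ∧ (0:ℕ) = 0 then 1
          else if c - 1 = 1 ∧ 1 ≤ (0:ℕ) then τ + 1 - 0
          else (fmPhase τ k (c - 1) - ((0 : ℕ) : ZMod (τ + 1))).val)
        rw [if_neg (by rintro ⟨-, h⟩; omega), if_neg (by rintro ⟨h, -⟩; exact hc h),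
          if_neg (by rintro ⟨h, -⟩; exact hc (sub_eq_zero.mp h)),
          if_neg (by rintro ⟨-, h⟩; omega)]
        congr 1
        rw [fmPhase_sub_one hdvd, natCast_tau hτ]
        push_cast
        ring
    rw [hD]
  · show (decide (1 ≤ fmD τ k τ (Sum.inr j)), fmD τ k τ (Sum.inr j)) =
      (decide (1 ≤ fmD τ k 0 (Sum.inr (j + 1))), fmD τ k 0 (Sum.inr (j + 1)))
    have hD : fmD τ k τ (Sum.inr j) = fmD τ k 0 (Sum.inr (j + 1)) := by
      rw [fmD_inr, fmD_inr]
      congr 1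
      rw [natCast_tau hτ]
      push_cast
      ring
    rw [hD]

lemma fm_iter_to_tau (hτ : 2 ≤ τ) (hdvd : τ + 1 ∣ k) (h1k : 1 < k) :
    (fmStep (fmG τ k h1k) (fun _ => τ))^[τ] (fmY τ k 0) = fmY τ k τ := by
  suffices h : ∀ t, t ≤ τ → (fmStep (fmG τ k h1k) (fun _ => τ))^[t] (fmY τ k 0) = fmY τ k t from
    h τ le_rfl
  intro t
  induction t with
  | zero => intro _; rfl
  | succ t ih =>
    intro h
    rw [Function.iterate_succ_apply', ih (by omega), fm_step hτ hdvd h1k (by omega)]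

lemma fmSigma_iter_inl (s : ℕ) (c : ZMod k) :
    (fmSigma τ k)^[s] (Sum.inl c) = Sum.inl (c - (s : ZMod k)) := by
  induction s with
  | zero => simp
  | succ s ih =>
    rw [Function.iterate_succ_apply', ih]
    show Sum.inl (c - (s : ZMod k) - 1) = _
    congr 1
    push_cast
    ring

lemma fmSigma_iter_inr (s : ℕ) (j : ZMod (τ + 1)) :
    (fmSigma τ k)^[s] (Sum.inr j : fmV τ k) = Sum.inr (j + (s : ZMod (τ + 1))) := by
  induction s with
  | zero => simp
  | succ s ih =>
    rw [Function.iterate_succ_apply', ih]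
    show (Sum.inr (j + (s : ZMod (τ + 1)) + 1) : fmV τ k) = _
    congr 1
    push_cast
    ring

lemma fm_comm_iter (hdvd : τ + 1 ∣ k) (h1k : 1 < k) (m : ℕ) :
    ∀ z : fmV τ k → Bool × ℕ,
      (fmStep (fmG τ k h1k) (fun _ => τ))^[m] (fun i => z (fmSigma τ k i)) =
        fun i => ((fmStep (fmG τ k h1k) (fun _ => τ))^[m] z) (fmSigma τ k i) := by
  induction m with
  | zero => intro z; rfl
  | succ m ih =>
    intro z
    have hc := fmStep_comp (fmG τ k h1k) (fmG τ k h1k) (fmSigma τ k) fmSigma_bij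
      (fun a b => (fmSigma_adj hdvd h1k a b).symm) (fun _ => τ) z
    rw [Function.iterate_succ_apply, Function.iterate_succ_apply,
      show fmStep (fmG τ k h1k) (fun _ => τ) (fun i => z (fmSigma τ k i)) =
        fun i => fmStep (fmG τ k h1k) (fun _ => τ) z (fmSigma τ k i) from hc]
    exact ih _

lemma fm_iter_mul (hτ : 2 ≤ τ) (hdvd : τ + 1 ∣ k) (h1k : 1 < k) (s : ℕ) :
    (fmStep (fmG τ k h1k) (fun _ => τ))^[τ * s] (fmY τ k 0) =
      fun i => fmY τ k 0 ((fmSigma τ k)^[s] i) := by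
  induction s with
  | zero => simp
  | succ s ih =>
    rw [show τ * (s + 1) = τ * s + τ by ring, Function.iterate_add_apply,
      fm_iter_to_tau hτ hdvd h1k, fm_y_tau hτ hdvd, fm_comm_iter hdvd h1k, ih]
    funext i
    rw [Function.iterate_succ_apply]

lemma fm_periodic (hτ : 2 ≤ τ) (hdvd : τ + 1 ∣ k) (h1k : 1 < k) :
    (fmStep (fmG τ k h1k) (fun _ => τ))^[τ * k] (fmY τ k 0) = fmY τ k 0 := by
  rw [fm_iter_mul hτ hdvd h1k]
  funext v
  rcases v with c | j
  · rw [fmSigma_iter_inl, ZMod.natCast_self, sub_zero]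
  · rw [fmSigma_iter_inr, (ZMod.natCast_eq_zero_iff k (τ + 1)).mpr hdvd, add_zero]

lemma fm_lower (hτ : 2 ≤ τ) (hdvd : τ + 1 ∣ k) (h1k : 1 < k) (p : ℕ) (hp : 0 < p)
    (hper : (fmStep (fmG τ k h1k) (fun _ => τ))^[p] (fmY τ k 0) = fmY τ k 0) : k ≤ p := by
  haveI : Fact (1 < τ + 1) := ⟨by omega⟩
  have h2 : (fmStep (fmG τ k h1k) (fun _ => τ))^[τ * p] (fmY τ k 0) = fmY τ k 0 := by
    rw [mul_comm, Function.iterate_mul]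
    exact Function.iterate_fixed hper τ
  have h3 : (fun i => fmY τ k 0 ((fmSigma τ k)^[p] i)) = fmY τ k 0 := by
    rw [← fm_iter_mul hτ hdvd h1k]
    exact h2
  have hq : (p : ZMod k) = 0 := by
    by_contra hq
    have e1 := congrFun h3 (Sum.inl ((p : ZMod k)))
    have e2 := congrFun h3 (Sum.inl (0 : ZMod k))
    rw [fmSigma_iter_inl, sub_self] at e1
    rw [fmSigma_iter_inl, zero_sub] at e2
    have e1' : fmD τ k 0 (Sum.inl (0 : ZMod k)) = fmD τ k 0 (Sum.inl ((p : ZMod k))) :=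
      congrArg Prod.snd e1
    have e2' : fmD τ k 0 (Sum.inl (-(p : ZMod k))) = fmD τ k 0 (Sum.inl (0 : ZMod k)) :=
      congrArg Prod.snd e2
    have hD0 : fmD τ k 0 (Sum.inl (0 : ZMod k)) = 1 := by
      show (if (0 : ZMod k) = 0 ∧ (0:ℕ) = 0 then 1 else _) = 1
      rw [if_pos ⟨rfl, rfl⟩]
    have hDp : fmD τ k 0 (Sum.inl ((p : ZMod k))) = (fmPhase τ k (p : ZMod k)).val := by
      show (if (p : ZMod k) = 0 ∧ (0:ℕ) = 0 then 1
        else if (p : ZMod k) = 1 ∧ 1 ≤ (0:ℕ) then τ + 1 - 0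
        else (fmPhase τ k (p : ZMod k) - ((0 : ℕ) : ZMod (τ + 1))).val) = _
      rw [if_neg (by rintro ⟨h, -⟩; exact hq h), if_neg (by rintro ⟨-, h⟩; omega)]
      congr 1
      push_cast
      ring
    have hDnp : fmD τ k 0 (Sum.inl (-(p : ZMod k))) = (fmPhase τ k (-(p : ZMod k))).val := by
      show (if -(p : ZMod k) = 0 ∧ (0:ℕ) = 0 then 1
        else if -(p : ZMod k) = 1 ∧ 1 ≤ (0:ℕ) then τ + 1 - 0
        else (fmPhase τ k (-(p : ZMod k)) - ((0 : ℕ) : ZMod (τ + 1))).val) = _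
      rw [if_neg (by rintro ⟨h, -⟩; exact hq (neg_eq_zero.mp h)),
        if_neg (by rintro ⟨-, h⟩; omega)]
      congr 1
      push_cast
      ring
    have hp1 : fmPhase τ k ((p : ZMod k)) = 1 := by
      have hval : (fmPhase τ k ((p : ZMod k))).val = 1 := by
        rw [← hDp, ← e1', hD0]
      rw [← ZMod.natCast_zmod_val (fmPhase τ k ((p : ZMod k))), hval, Nat.cast_one]
    have hp2 : fmPhase τ k (-(p : ZMod k)) = 1 := by
      have hval : (fmPhase τ k (-(p : ZMod k))).val = 1 := by
        rw [← hDnp, e2', hD0]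
      rw [← ZMod.natCast_zmod_val (fmPhase τ k (-(p : ZMod k))), hval, Nat.cast_one]
    rw [fmPhase_neg hdvd, hp1] at hp2
    exact fmTwo_ne_zero hτ (by linear_combination - hp2)
  exact Nat.le_of_dvd hp ((ZMod.natCast_eq_zero_iff p k).mp hq)

end Sigma

/-- for every `τ ≥ 2` and `m ≥ 2` there are a graph `G` and a
periodic configuration of the conjunctive network with firing memory on `G`
with uniform maximum delay `τ` whose minimal period is at least
`Π_{p prime, p ≤ m} p`. -/
theorem uniform_delay_primorial_period (τ : ℕ) (hτ : 2 ≤ τ) (m : ℕ) (hm : 2 ≤ m) :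
    ∃ (n : ℕ) (G : SimpleGraph (Fin n)) (y : Fin n → Bool × ℕ),
      y ∈ Function.periodicPts (fmStep G (fun _ => τ)) ∧
      (∏ p ∈ (Finset.range (m + 1)).filter Nat.Prime, p) ≤
        Function.minimalPeriod (fmStep G (fun _ => τ)) y := by
  classical
  set P := ∏ p ∈ (Finset.range (m + 1)).filter Nat.Prime, p with hPdef
  have hP0 : 0 < P := Finset.prod_pos (fun p hp => (Finset.mem_filter.mp hp).2.pos)
  set k := P * (τ + 1) with hkdef
  have hdvd : τ + 1 ∣ k := Dvd.intro_left P rfl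
  have hk1 : τ + 1 ≤ k := by
    calc τ + 1 = 1 * (τ + 1) := by ring
    _ ≤ P * (τ + 1) := Nat.mul_le_mul_right _ hP0
  have h1k : 1 < k := by omega
  haveI : NeZero k := ⟨by omega⟩
  haveI : NeZero (τ + 1) := ⟨by omega⟩
  have hcard : Fintype.card (fmV τ k) = k + (τ + 1) := by
    rw [Fintype.card_sum, ZMod.card, ZMod.card]
  let e : fmV τ k ≃ Fin (k + (τ + 1)) := Fintype.equivFinOfCardEq hcard
  let G' : SimpleGraph (Fin (k + (τ + 1))) :=
    SimpleGraph.comap (fun i => e.symm i) (fmG τ k h1k)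
  let y' : Fin (k + (τ + 1)) → Bool × ℕ := fun i => fmY τ k 0 (e.symm i)
  have hadj : ∀ a b, G'.Adj a b ↔ (fmG τ k h1k).Adj (e.symm a) (e.symm b) := fun a b => Iff.rfl
  have hcomp : ∀ z, fmStep G' (fun _ => τ) (fun i => z (e.symm i)) =
      fun i => fmStep (fmG τ k h1k) (fun _ => τ) z (e.symm i) := fun z =>
    fmStep_comp (fmG τ k h1k) G' (fun i => e.symm i) e.symm.bijective hadj (fun _ => τ) z
  have hiter : ∀ (t : ℕ) (z : fmV τ k → Bool × ℕ),
      (fmStep G' (fun _ => τ))^[t] (fun i => z (e.symm i)) =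
        fun i => ((fmStep (fmG τ k h1k) (fun _ => τ))^[t] z) (e.symm i) := by
    intro t
    induction t with
    | zero => intro z; rfl
    | succ t ih =>
      intro z
      rw [Function.iterate_succ_apply, Function.iterate_succ_apply, hcomp z]
      exact ih _
  have hmem : y' ∈ Function.periodicPts (fmStep G' (fun _ => τ)) := by
    rw [Function.mem_periodicPts]
    refine ⟨τ * k, Nat.mul_pos (by omega) (by omega), ?_⟩
    show (fmStep G' (fun _ => τ))^[τ * k] y' = y'
    rw [show y' = fun i => fmY τ k 0 (e.symm i) from rfl, hiter, fm_periodic hτ hdvd h1k]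
  refine ⟨k + (τ + 1), G', y', hmem, ?_⟩
  set p := Function.minimalPeriod (fmStep G' (fun _ => τ)) y' with hpdef
  have hppos : 0 < p := Function.minimalPeriod_pos_of_mem_periodicPts hmem
  have hfix : (fmStep G' (fun _ => τ))^[p] y' = y' :=
    Function.isPeriodicPt_minimalPeriod _ _
  have hfix2 : (fmStep (fmG τ k h1k) (fun _ => τ))^[p] (fmY τ k 0) = fmY τ k 0 := by
    have h := hiter p (fmY τ k 0)
    rw [show (fun i => fmY τ k 0 (e.symm i)) = y' from rfl, hfix] at h
    funext v
    have h3 := congrFun h (e v)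
    simp only [Equiv.symm_apply_apply] at h3
    have h4 : y' (e v) = fmY τ k 0 v := by
      show fmY τ k 0 (e.symm (e v)) = fmY τ k 0 v
      rw [Equiv.symm_apply_apply]
    rw [← h4]
    exact h3.symm
  have hk_le : k ≤ p := fm_lower hτ hdvd h1k p hppos hfix2
  have hPk : P ≤ k := by
    calc P = P * 1 := by ring
    _ ≤ P * (τ + 1) := Nat.mul_le_mul_left _ (by omega)
  omega
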